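/- Let u_max > 0 and β > 0, define the barrier action cost g(u) = −(2 β u_max / π) · Real.log (Real.cos (π u / (2 u_max))), and let w ∈ ℝ. Set u* = (2 u_max / π) · Real.arctan (w / β). Then u* ∈ (−u_max, u_max), and u* is the unique maximizer of u ↦ w·u − g(u) on (−u_max, u_max): for every u ∈ (−u_max, u_max) with u ≠ u*, w·u − g(u) < w·u* − g(u*). -/

import Mathlib

open Real

theorem stmt_13 (umax β : ℝ) (humax : 0 < umax) (hβ : 0 < β)
    (g : ℝ → ℝ)
    (hg : ∀ u, g u = -(2 * β * umax / π) * Real.log (Real.cos (π * u / (2 * umax))))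
    (w : ℝ) (ustar : ℝ) (hustar : ustar = (2 * umax / π) * Real.arctan (w / β)) :
    ustar ∈ Set.Ioo (-umax) umax ∧
      ∀ u ∈ Set.Ioo (-umax) umax, u ≠ ustar →
        w * u - g u < w * ustar - g ustar := by
  have hπ := Real.pi_pos
  set k := π / (2 * umax) with hk
  have hk0 : 0 < k := by positivity
  set A := Real.arctan (w / β) with hA
  have hA1 : -(π/2) < A := Real.neg_pi_div_two_lt_arctan _
  have hA2 : A < π/2 := Real.arctan_lt_pi_div_two _
  have hkust : k * ustar = A := by
    rw [hustar, hk]; field_simp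
  have hmem : ∀ x ∈ Set.Ioo (-umax) umax, k * x ∈ Set.Ioo (-(π/2)) (π/2) := by
    intro x hx
    have h1 := hx.1
    have h2 := hx.2
    constructor
    · have : k * umax = π/2 := by rw [hk]; field_simp
      nlinarith
    · have : k * umax = π/2 := by rw [hk]; field_simp
      nlinarith
  have hust_mem : ustar ∈ Set.Ioo (-umax) umax := by
    rw [hustar]
    have hp : 0 < 2 * umax / π := by positivity
    have hval : 2 * umax / π * (π / 2) = umax := by field_simp
    constructor
    · nlinarith [mul_lt_mul_of_pos_left hA1 hp]
    · nlinarith [mul_lt_mul_of_pos_left hA2 hp]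
  refine ⟨hust_mem, ?_⟩
  -- derivative of f
  set c := 2 * β * umax / π with hc
  have hck : c * k = β := by rw [hc, hk]; field_simp
  have hg' : ∀ u, g u = -c * Real.log (Real.cos (k * u)) := by
    intro u
    rw [hg u]
    have : π * u / (2 * umax) = k * u := by rw [hk]; ring
    rw [this]
  have hf : ∀ x ∈ Set.Ioo (-umax) umax,
      HasDerivAt (fun u => w * u - g u) (w - β * Real.tan (k * x)) x := by
    intro x hx
    have hcosx : 0 < Real.cos (k * x) := Real.cos_pos_of_mem_Ioo (hmem x hx)
    have hlin : HasDerivAt (fun u : ℝ => k * u) k x := by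
      simpa using (hasDerivAt_id x).const_mul k
    have hcos : HasDerivAt (fun u : ℝ => Real.cos (k * u)) (-Real.sin (k * x) * k) x :=
      (Real.hasDerivAt_cos (k * x)).comp x hlin
    have hlog : HasDerivAt (fun u : ℝ => Real.log (Real.cos (k * u)))
        ((-Real.sin (k * x) * k) / Real.cos (k * x)) x :=
      hcos.log (ne_of_gt hcosx)
    have hgD : HasDerivAt g (-c * ((-Real.sin (k * x) * k) / Real.cos (k * x))) x := by
      have h := hlog.const_mul (-c)
      have hgeq : (fun u => -c * Real.log (Real.cos (k * u))) = g := (funext hg').symm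
      rw [← hgeq]
      simpa [neg_mul] using h
    have hfD := ((hasDerivAt_id x).const_mul w).sub hgD
    refine HasDerivAt.congr_deriv (f := fun u => w * u - g u) hfD ?_
    rw [Real.tan_eq_sin_div_cos, ← hck]
    ring
  have hcont : ContinuousOn (fun u => w * u - g u) (Set.Ioo (-umax) umax) := fun x hx =>
    (hf x hx).continuousAt.continuousWithinAt
  intro u hu hne
  have hsub : ∀ a b : ℝ, a ∈ Set.Ioo (-umax) umax → b ∈ Set.Ioo (-umax) umax →
      Set.Icc a b ⊆ Set.Ioo (-umax) umax := by
    intro a b ha hb x hx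
    exact ⟨lt_of_lt_of_le ha.1 hx.1, lt_of_le_of_lt hx.2 hb.2⟩
  rcases lt_or_gt_of_ne hne with hlt | hgt
  · have hss := hsub u ustar hu hust_mem
    have hmono : StrictMonoOn (fun u => w * u - g u) (Set.Icc u ustar) := by
      apply strictMonoOn_of_deriv_pos (convex_Icc _ _)
      · exact hcont.mono hss
      · intro x hx
        rw [interior_Icc] at hx
        have hx' : x ∈ Set.Ioo (-umax) umax := hss ⟨le_of_lt hx.1, le_of_lt hx.2⟩
        rw [(hf x hx').deriv]
        have hxm := hmem x hx'
        have htan : Real.tan (k * x) < Real.tan A := by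
          apply Real.tan_lt_tan_of_lt_of_lt_pi_div_two hxm.1 hA2
          calc k * x < k * ustar := by nlinarith [hx.2]
            _ = A := hkust
        rw [hA, Real.tan_arctan] at htan
        have : β * Real.tan (k * x) < β * (w / β) := by nlinarith
        rw [mul_div_cancel₀ _ (ne_of_gt hβ)] at this
        linarith
    exact hmono ⟨le_refl _, le_of_lt hlt⟩ ⟨le_of_lt hlt, le_refl _⟩ hlt
  · have hss := hsub ustar u hust_mem hu
    have hanti : StrictAntiOn (fun u => w * u - g u) (Set.Icc ustar u) := by
      apply strictAntiOn_of_deriv_neg (convex_Icc _ _)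
      · exact hcont.mono hss
      · intro x hx
        rw [interior_Icc] at hx
        have hx' : x ∈ Set.Ioo (-umax) umax := hss ⟨le_of_lt hx.1, le_of_lt hx.2⟩
        rw [(hf x hx').deriv]
        have hxm := hmem x hx'
        have htan : Real.tan A < Real.tan (k * x) := by
          apply Real.tan_lt_tan_of_lt_of_lt_pi_div_two hA1 hxm.2
          calc A = k * ustar := hkust.symm
            _ < k * x := by nlinarith [hx.1]
        rw [hA, Real.tan_arctan] at htan
        have : β * (w / β) < β * Real.tan (k * x) := by nlinarith
        rw [mul_div_cancel₀ _ (ne_of_gt hβ)] at this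
        linarith
    exact hanti ⟨le_refl _, le_of_lt hgt⟩ ⟨le_of_lt hgt, le_refl _⟩ hgt
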